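/- Let n be a natural number, p ∈ [0,1], ρ ∈ [0, 1/2], Δ ≥ 0 real, with n·p ≤ 1 and Δ·n·p ≤ 1. Define α = 1 − (1−p)^⌈(1−ρ)n⌉ and γ = α/(1 + Δ·α). Then γ ≥ n·p/8. -/

import Mathlib

set_option maxHeartbeats 1000000 in
theorem stmt_4 (n : ℕ) (p ρ Δ : ℝ)
    (hp0 : 0 ≤ p) (hp1 : p ≤ 1) (hρ0 : 0 ≤ ρ) (hρ1 : ρ ≤ 1 / 2) (hΔ : 0 ≤ Δ)
    (hnp : (n : ℝ) * p ≤ 1) (hΔnp : Δ * n * p ≤ 1)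
    (α γ : ℝ)
    (hα : α = 1 - (1 - p) ^ (⌈(1 - ρ) * n⌉₊))
    (hγ : γ = α / (1 + Δ * α)) :
    γ ≥ n * p / 8 := by
  set m : ℕ := ⌈(1 - ρ) * n⌉₊ with hm
  clear_value m
  have hn0 : (0:ℝ) ≤ n := Nat.cast_nonneg n
  -- m ≥ n/2
  have hm1 : (n:ℝ) / 2 ≤ m := by
    have h1 : (n:ℝ) / 2 ≤ (1 - ρ) * n := by nlinarith
    rw [hm]; exact h1.trans (Nat.le_ceil _)
  -- m ≤ n
  have hm2 : (m:ℝ) ≤ n := by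
    have : m ≤ n := by
      rw [hm]
      apply Nat.ceil_le.mpr
      push_cast
      nlinarith
    exact_mod_cast this
  have hmp1 : (m:ℝ) * p ≤ 1 := le_trans (by nlinarith) hnp
  have hmp0 : (0:ℝ) ≤ (m:ℝ) * p := by positivity
  -- upper bound (1-p)^m ≤ 1/(1+mp)
  have hBern : 1 + (m:ℝ) * p ≤ (1 + p) ^ m := by
    have := one_add_mul_le_pow (a := p) (by linarith) m
    linarith [this]
  have hpos : (0:ℝ) < 1 + (m:ℝ) * p := by linarith
  have hprod : (1 - p) ^ m * (1 + p) ^ m ≤ 1 := by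
    rw [← mul_pow]
    have h1 : (1 - p) * (1 + p) ≤ 1 := by nlinarith
    have h0 : 0 ≤ (1 - p) * (1 + p) := by nlinarith
    exact pow_le_one₀ h0 h1
  have hub : (1 - p) ^ m ≤ 1 / (1 + (m:ℝ) * p) := by
    rw [le_div_iff₀ hpos]
    calc (1 - p) ^ m * (1 + (m:ℝ) * p) ≤ (1 - p) ^ m * (1 + p) ^ m := by
          apply mul_le_mul_of_nonneg_left hBern (pow_nonneg (by linarith) m)
      _ ≤ 1 := hprod
  -- α ≥ mp/(1+mp) ≥ mp/2 ≥ np/4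
  have hαlb : (n:ℝ) * p / 4 ≤ α := by
    have h1 : 1 - 1 / (1 + (m:ℝ) * p) ≤ α := by rw [hα]; linarith
    have h2 : 1 - 1 / (1 + (m:ℝ) * p) = (m:ℝ) * p / (1 + (m:ℝ) * p) := by
      field_simp
      ring
    have h3 : (m:ℝ) * p / 2 ≤ (m:ℝ) * p / (1 + (m:ℝ) * p) := by
      rw [div_le_div_iff₀ (by norm_num) hpos]
      nlinarith
    have h4 : (n:ℝ) * p / 4 ≤ (m:ℝ) * p / 2 := by nlinarith
    linarith [h2 ▸ h1]
  -- α ≤ mp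
  have hαub : α ≤ (m:ℝ) * p := by
    have := one_add_mul_le_pow (a := -p) (by linarith) m
    rw [hα]
    have h : 1 + (m:ℝ) * (-p) ≤ (1 + -p) ^ m := this
    have : (1 + -p) ^ m = (1 - p) ^ m := by ring_nf
    nlinarith [h, this]
  have hα0 : 0 ≤ α := le_trans (by positivity) hαlb
  have hΔα : Δ * α ≤ 1 := by
    calc Δ * α ≤ Δ * ((m:ℝ) * p) := mul_le_mul_of_nonneg_left hαub hΔ
      _ ≤ Δ * ((n:ℝ) * p) :=
        mul_le_mul_of_nonneg_left (mul_le_mul_of_nonneg_right hm2 hp0) hΔ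
      _ ≤ 1 := by rw [← mul_assoc]; exact hΔnp
  have hden : 0 < 1 + Δ * α := by nlinarith
  rw [hγ, ge_iff_le, div_le_div_iff₀ (by norm_num) hden]
  nlinarith [mul_nonneg hΔ hα0, hΔα, hαlb, hα0]
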